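/- Under the weighted K-NN classification utility ν with sorted training points and 1 ≤ K ≤ N, the Shapley values satisfy s_N = (1/N)·∑_{k=0}^{K−1} (1/binom(N−1,k)) · ∑_{S ∈ B_k(N)} (ν(S∪{N}) − ν(S)), and for every 1 ≤ i ≤ N−1, s_i = s_{i+1} + (1/(N−1))·[ ∑_{k=0}^{K−2} (1/binom(N−2,k)) · ∑_{S ∈ B_k(i)∩B_k(i+1)} (ν(S∪{i}) − ν(S∪{i+1})) + ∑_{k=K−1}^{N−2} (1/binom(N−2,k)) · ∑_{S ∈ B_{K−1}(i)∩B_{K−1}(i+1)} binom(N − max(S∪{i,i+1}), k−K+1) · (ν(S∪{i}) − ν(S∪{i+1})) ], where empty sums are 0. -/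

import Mathlib

open Finset

/-- The Shapley value of player `i` in the cooperative game with player set `P`
and utility function `ν`. -/
noncomputable def shapley (P : Finset ℕ) (ν : Finset ℕ → ℝ) (i : ℕ) : ℝ :=
  (1 / (P.card : ℝ)) * ∑ S ∈ (P.erase i).powerset,
    (1 / ((P.card - 1).choose S.card : ℝ)) * (ν (insert i S) - ν S)

/-- The weighted K-NN classification utility: training points are sorted by
increasing distance to the test point, so the k-th nearest neighbor within `S`
is the k-th smallest element of `S` (given by the sorted list of `S`). -/
noncomputable def wknnUtil (K : ℕ) (w : ℕ → ℝ) (y : ℕ → ℕ) (ytest : ℕ)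
    (S : Finset ℕ) : ℝ :=
  ∑ k ∈ Finset.range (min K S.card),
    w ((S.sort (· ≤ ·)).getD k 0) *
      (if y ((S.sort (· ≤ ·)).getD k 0) = ytest then (1 : ℝ) else 0)


lemma sort_union (S E : Finset ℕ) (h : ∀ s ∈ S, ∀ e ∈ E, s < e) :
    (S ∪ E).sort (· ≤ ·) = S.sort (· ≤ ·) ++ E.sort (· ≤ ·) := by
  have hdisj : Disjoint S E := by
    rw [Finset.disjoint_left]
    intro a haS haE
    exact lt_irrefl a (h a haS a haE)
  refine (fun (hp : List.Perm _ _) h1 h2 => List.Perm.eq_of_pairwise' (r := (· ≤ ·)) h1 h2 hp) ?_ ?_ ?_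
  · rw [← Multiset.coe_eq_coe]
    rw [← Finset.disjUnion_eq_union S E hdisj]
    simp only [Finset.sort_eq, ← Multiset.coe_add]
    rfl
  · exact Finset.pairwise_sort _ _
  · rw [List.pairwise_append]
    refine ⟨Finset.pairwise_sort _ _, Finset.pairwise_sort _ _, ?_⟩
    intro a ha b hb
    exact (h a (by simpa using (Finset.mem_sort _).mp ha) b
      (by simpa using (Finset.mem_sort _).mp hb)).le

/-- the `c` smallest elements of `T` -/
def lowP (c : ℕ) (T : Finset ℕ) : Finset ℕ := ((T.sort (· ≤ ·)).take c).toFinset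

lemma lowP_subset (c : ℕ) (T : Finset ℕ) : lowP c T ⊆ T := by
  intro x hx
  rw [lowP, List.mem_toFinset] at hx
  have := List.mem_of_mem_take hx
  rwa [Finset.mem_sort] at this

lemma card_lowP (c : ℕ) (T : Finset ℕ) : (lowP c T).card = min c T.card := by
  rw [lowP, List.toFinset_card_of_nodup ((T.sort_nodup _).sublist (List.take_sublist _ _)),
    List.length_take, Finset.length_sort]

lemma lowP_union (c : ℕ) (S E : Finset ℕ) (h : ∀ s ∈ S, ∀ e ∈ E, s < e)
    (hc : S.card = c) : lowP c (S ∪ E) = S := by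
  rw [lowP, sort_union S E h,
    List.take_append_of_le_length (by rw [Finset.length_sort, hc]),
    List.take_of_length_le (by rw [Finset.length_sort, hc]), Finset.sort_toFinset]

lemma lowP_eq_self {c : ℕ} {T : Finset ℕ} (h : T.card ≤ c) : lowP c T = T := by
  rw [lowP, List.take_of_length_le (by rwa [Finset.length_sort]), Finset.sort_toFinset]

lemma lt_of_mem_lowP {c : ℕ} {T : Finset ℕ} {x z : ℕ} (hx : x ∈ lowP c T)
    (hz : z ∈ T) (hz' : z ∉ lowP c T) : x < z := by
  have hs := List.sortedLT_iff_pairwise.mp T.sortedLT_sort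
  rw [← List.take_append_drop c (T.sort (· ≤ ·)), List.pairwise_append] at hs
  rw [lowP, List.mem_toFinset] at hx hz'
  have hzmem : z ∈ T.sort (· ≤ ·) := (Finset.mem_sort _).mpr hz
  rw [← List.take_append_drop c (T.sort (· ≤ ·)), List.mem_append] at hzmem
  exact hs.2.2 x hx z (hzmem.resolve_left hz')

lemma sum_range_getD (l : List ℕ) (f : ℕ → ℝ) :
    ∑ k ∈ Finset.range l.length, f (l.getD k 0) = (l.map f).sum := by
  induction l with
  | nil => simp
  | cons a t ih =>
    rw [List.length_cons, Finset.sum_range_succ', List.map_cons, List.sum_cons, add_comm, ← ih]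
    simp

lemma wknn_eq (K : ℕ) (w : ℕ → ℝ) (y : ℕ → ℕ) (ytest : ℕ) (S : Finset ℕ) :
    wknnUtil K w y ytest S =
      ∑ x ∈ lowP K S, w x * (if y x = ytest then (1 : ℝ) else 0) := by
  set f : ℕ → ℝ := fun x => w x * (if y x = ytest then (1 : ℝ) else 0) with hf
  set L := S.sort (· ≤ ·) with hL
  have hlen : (L.take K).length = min K S.card := by
    rw [List.length_take, Finset.length_sort]
  rw [wknnUtil, lowP, List.sum_toFinset f ((S.sort_nodup _).sublist (List.take_sublist _ _)),
    ← sum_range_getD, hlen]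
  apply Finset.sum_congr rfl
  intro k hk
  rw [Finset.mem_range] at hk
  have h1 : k < (L.take K).length := by omega
  have h2 : k < L.length := by rw [Finset.length_sort]; omega
  rw [List.getD_eq_getElem _ _ h1, List.getD_eq_getElem _ _ h2, List.getElem_take]

lemma wknn_insert_top (K : ℕ) (w : ℕ → ℝ) (y : ℕ → ℕ) (ytest : ℕ) (S : Finset ℕ)
    (a : ℕ) (hK : K ≤ S.card) (ha : ∀ b ∈ S, b < a) :
    wknnUtil K w y ytest (insert a S) = wknnUtil K w y ytest S := by
  have hins : insert a S = S ∪ {a} := by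
    ext x; simp [or_comm]
  have hlow : lowP K (insert a S) = lowP K S := by
    rw [hins, lowP, lowP, sort_union S {a} (by simpa using ha),
      List.take_append_of_le_length (by rwa [Finset.length_sort])]
  rw [wknn_eq, wknn_eq, hlow]

lemma sort_insert_map (i : ℕ) (T : Finset ℕ) (hi : i ∉ T) (hj : i + 1 ∉ T) :
    (insert (i + 1) T).sort (· ≤ ·) =
      ((insert i T).sort (· ≤ ·)).map (fun x => if x = i then i + 1 else x) := by
  set g : ℕ → ℕ := fun x => if x = i then i + 1 else x with hg
  refine (fun (hp : List.Perm _ _) h1 h2 => List.Perm.eq_of_pairwise' (r := (· ≤ ·)) h1 h2 hp) ?_ ?_ ?_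
  · rw [← Multiset.coe_eq_coe, ← Multiset.map_coe, Finset.sort_eq, Finset.sort_eq,
      Finset.insert_val_of_notMem hi, Finset.insert_val_of_notMem hj,
      Multiset.map_cons]
    have : Multiset.map g T.val = Multiset.map id T.val := by
      apply Multiset.map_congr rfl
      intro x hx
      have : x ≠ i := fun h => hi (h ▸ hx)
      simp [hg, this]
    rw [this, Multiset.map_id]
    simp [hg]
  · exact Finset.pairwise_sort _ _
  · rw [List.pairwise_map]
    apply List.Pairwise.imp_of_mem (l := (insert i T).sort (· ≤ ·))
      (R := (· < ·)) ?_ (List.sortedLT_iff_pairwise.mp (insert i T).sortedLT_sort)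
    intro a b ha hb hab
    rw [Finset.mem_sort, Finset.mem_insert] at ha hb
    have ha' : a ≠ i + 1 := by
      rcases ha with h | h
      · omega
      · exact fun hh => hj (hh ▸ h)
    have hb' : b ≠ i + 1 := by
      rcases hb with h | h
      · omega
      · exact fun hh => hj (hh ▸ h)
    simp only [hg]
    split_ifs <;> omega

lemma lowP_insert_map (K i : ℕ) (T : Finset ℕ) (hi : i ∉ T) (hj : i + 1 ∉ T) :
    lowP K (insert (i + 1) T) =
      (lowP K (insert i T)).image (fun x => if x = i then i + 1 else x) := by
  rw [lowP, lowP, sort_insert_map i T hi hj, ← List.map_take]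
  simp only [List.toFinset, ← Multiset.map_coe, Multiset.toFinset_map]

lemma wknn_diff (K : ℕ) (w : ℕ → ℝ) (y : ℕ → ℕ) (ytest : ℕ) (i : ℕ) (T : Finset ℕ)
    (hi : i ∉ T) (hj : i + 1 ∉ T) :
    wknnUtil K w y ytest (insert i T) - wknnUtil K w y ytest (insert (i + 1) T) =
      if i ∈ lowP K (insert i T) then
        (w i * (if y i = ytest then (1 : ℝ) else 0) -
          w (i + 1) * (if y (i + 1) = ytest then (1 : ℝ) else 0)) else 0 := by
  set g : ℕ → ℕ := fun x => if x = i then i + 1 else x with hg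
  set f : ℕ → ℝ := fun x => w x * (if y x = ytest then (1 : ℝ) else 0) with hf
  have hmem : ∀ x ∈ lowP K (insert i T), x ≠ i + 1 := by
    intro x hx
    have := lowP_subset K (insert i T) hx
    rw [Finset.mem_insert] at this
    rcases this with h | h
    · omega
    · exact fun hh => hj (hh ▸ h)
  rw [wknn_eq, wknn_eq, lowP_insert_map K i T hi hj, Finset.sum_image ?inj]
  case inj =>
    intro a ha b hb hab
    have ha' := hmem a ha
    have hb' := hmem b hb
    simp only [hg] at hab
    split_ifs at hab <;> omega
  rw [← Finset.sum_sub_distrib, ← Finset.sum_ite_eq' (lowP K (insert i T)) i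
    (fun x => f i - f (i + 1))]
  apply Finset.sum_congr rfl
  intro x hx
  by_cases hxi : x = i
  · subst hxi
    simp [hg, hf]
  · simp only [hg, hf, if_neg hxi]
    simp

lemma pred_of_union (K i : ℕ) (S E : Finset ℕ) (hcard : (insert i S).card = K)
    (h1 : ∀ s ∈ insert i S, ∀ e ∈ E, s < e) :
    i ∈ lowP K (insert i (S ∪ E)) := by
  have heq : insert i (S ∪ E) = (insert i S) ∪ E := by
    ext x; simp [or_assoc]
  rw [heq, lowP_union K _ _ h1 hcard]
  exact Finset.mem_insert_self i S

lemma gt_of_pred (K i : ℕ) (T : Finset ℕ) (hK : 1 ≤ K) (hi : i ∉ T) (hj : i + 1 ∉ T)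
    (hPred : i ∈ lowP K (insert i T)) :
    ∀ e ∈ T \ lowP (K - 1) T, i + 1 < e := by
  intro e he
  rw [Finset.mem_sdiff] at he
  obtain ⟨heT, heS⟩ := he
  by_contra hcon
  -- then e < i (since e ≠ i, e ≠ i + 1, e ≤ i + 1)
  have hei : e ≠ i := fun h => hi (h ▸ heT)
  have hej : e ≠ i + 1 := fun h => hj (h ▸ heT)
  have helt : e < i := by omega
  set S := lowP (K - 1) T with hS
  set E := T \ S with hE
  have heE : e ∈ E := Finset.mem_sdiff.mpr ⟨heT, heS⟩
  have hEne : E.Nonempty := ⟨e, heE⟩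
  set m := E.min' hEne with hm
  have hmE : m ∈ E := E.min'_mem hEne
  have hmT : m ∈ T := (Finset.mem_sdiff.mp hmE).1
  have hmS : m ∉ S := (Finset.mem_sdiff.mp hmE).2
  have hmlt : m < i := lt_of_le_of_lt (E.min'_le e heE) helt
  -- card S = K - 1
  have hcardT : ¬ (T.card ≤ K - 1) := by
    intro h
    rw [hS, lowP_eq_self h] at hmS
    exact hmS hmT
  have hcardS : S.card = K - 1 := by
    rw [hS, card_lowP]; omega
  -- decompose insert i T = (insert m S) ∪ ((T \ insert m S) ∪ {i})
  have hsubm : insert m S ⊆ T := by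
    intro x hx
    rcases Finset.mem_insert.mp hx with h | h
    · exact h ▸ hmT
    · exact lowP_subset _ _ h
  have hdec : insert i T = (insert m S) ∪ ((T \ insert m S) ∪ {i}) := by
    ext x
    simp only [Finset.mem_insert, Finset.mem_union, Finset.mem_sdiff, Finset.mem_singleton]
    constructor
    · rintro (rfl | hx)
      · right; right; rfl
      · by_cases hx' : x = m ∨ x ∈ S
        · left; exact hx'
        · right; left; exact ⟨hx, fun hh => hx' hh⟩
    · rintro ((rfl | hx) | ⟨hx, _⟩ | rfl)
      · right; exact hmT
      · right; exact lowP_subset _ _ hx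
      · right; exact hx
      · left; rfl
  have hpoint : ∀ a ∈ insert m S, ∀ b ∈ (T \ insert m S) ∪ {i}, a < b := by
    intro a ha b hb
    have ham : a ≤ m := by
      rcases Finset.mem_insert.mp ha with h | h
      · omega
      · exact (lt_of_mem_lowP h hmT hmS).le
    rcases Finset.mem_union.mp hb with h | h
    · rw [Finset.mem_sdiff] at h
      obtain ⟨hbT, hbm⟩ := h
      have hbS : b ∉ S := fun hh => hbm (Finset.mem_insert_of_mem hh)
      have hbE : b ∈ E := Finset.mem_sdiff.mpr ⟨hbT, hbS⟩
      have : m ≤ b := E.min'_le b hbE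
      have : b ≠ m := fun hh => hbm (hh ▸ Finset.mem_insert_self m S)
      omega
    · rw [Finset.mem_singleton] at h
      omega
  have hcardm : (insert m S).card = K := by
    rw [Finset.card_insert_of_notMem hmS, hcardS]; omega
  rw [hdec, lowP_union K _ _ hpoint hcardm] at hPred
  rcases Finset.mem_insert.mp hPred with h | h
  · omega
  · exact hi (lowP_subset _ _ h)

lemma count_eq (K i N t : ℕ) (hK : 1 ≤ K) (ht : K - 1 ≤ t)
    (D : Finset ℕ) (hD : D = ((Finset.Icc 1 N).erase i).erase (i + 1)) :
    ((D.powersetCard t).filter (fun T => i ∈ lowP K (insert i T))).card =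
      ∑ S ∈ D.powersetCard (K - 1),
        ((Finset.Ioc ((insert i (insert (i + 1) S)).sup id) N).powersetCard
          (t + 1 - K)).card := by
  have hDmem : ∀ x ∈ D, 1 ≤ x ∧ x ≤ N ∧ x ≠ i ∧ x ≠ i + 1 := by
    intro x hx
    rw [hD, Finset.mem_erase, Finset.mem_erase, Finset.mem_Icc] at hx
    exact ⟨hx.2.2.1, hx.2.2.2, hx.2.1, hx.1⟩
  have hfib : ∀ T ∈ (D.powersetCard t).filter (fun T => i ∈ lowP K (insert i T)),
      lowP (K - 1) T ∈ D.powersetCard (K - 1) := by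
    intro T hT
    rw [Finset.mem_filter, Finset.mem_powersetCard] at hT
    rw [Finset.mem_powersetCard]
    refine ⟨(lowP_subset _ _).trans hT.1.1, ?_⟩
    rw [card_lowP, hT.1.2]; omega
  rw [Finset.card_eq_sum_card_fiberwise hfib]
  apply Finset.sum_congr rfl
  intro S hS
  rw [Finset.mem_powersetCard] at hS
  obtain ⟨hSD, hScard⟩ := hS
  set M := (insert i (insert (i + 1) S)).sup id with hM
  have hMi : i ≤ M := Finset.le_sup (f := id) (Finset.mem_insert_self _ _)
  have hMj : i + 1 ≤ M := Finset.le_sup (f := id)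
    (Finset.mem_insert_of_mem (Finset.mem_insert_self _ _))
  have hMS : ∀ s ∈ S, s ≤ M := fun s hs => Finset.le_sup (f := id)
    (Finset.mem_insert_of_mem (Finset.mem_insert_of_mem hs))
  have hiS : i ∉ S := fun h => (hDmem i (hSD h)).2.2.1 rfl
  apply Finset.card_bij' (fun T _ => T \ S) (fun E _ => S ∪ E)
  · -- forward membership
    intro T hT
    rw [Finset.mem_filter, Finset.mem_filter, Finset.mem_powersetCard] at hT
    obtain ⟨⟨⟨hTD, hTcard⟩, hPred⟩, hlow⟩ := hT
    have hiT : i ∉ T := fun h => (hDmem i (hTD h)).2.2.1 rfl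
    have hjT : i + 1 ∉ T := fun h => (hDmem (i + 1) (hTD h)).2.2.2 rfl
    have hgt := gt_of_pred K i T hK hiT hjT hPred
    rw [Finset.mem_powersetCard]
    constructor
    · intro e he
      rw [Finset.mem_sdiff] at he
      have heS' : e ∉ lowP (K - 1) T := by rw [hlow]; exact he.2
      have h1 : i + 1 < e := hgt e (Finset.mem_sdiff.mpr ⟨he.1, heS'⟩)
      have heN : e ≤ N := (hDmem e (hTD he.1)).2.1
      rw [Finset.mem_Ioc]
      refine ⟨?_, heN⟩
      rw [hM]
      rw [Finset.sup_lt_iff (show (⊥ : ℕ) < e by simp [Nat.bot_eq_zero]; omega)]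
      intro b hb
      simp only [id_eq]
      rcases Finset.mem_insert.mp hb with rfl | hb
      · omega
      rcases Finset.mem_insert.mp hb with rfl | hb
      · omega
      · have hbS : b ∈ lowP (K - 1) T := by rw [hlow]; exact hb
        exact lt_of_mem_lowP hbS he.1 heS'
    · rw [Finset.card_sdiff_of_subset (hlow ▸ lowP_subset (K - 1) T), hTcard, hScard]
      omega
  · -- backward membership
    intro E hE
    rw [Finset.mem_powersetCard] at hE
    obtain ⟨hEsub, hEcard⟩ := hE
    have hEM : ∀ e ∈ E, M < e ∧ e ≤ N := by
      intro e he
      have := hEsub he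
      rwa [Finset.mem_Ioc] at this
    have hdisj : Disjoint S E := by
      rw [Finset.disjoint_left]
      intro a haS haE
      have := (hEM a haE).1
      have := hMS a haS
      omega
    have hpoint : ∀ s ∈ insert i S, ∀ e ∈ E, s < e := by
      intro s hs e he
      have h1 := (hEM e he).1
      rcases Finset.mem_insert.mp hs with rfl | hs
      · omega
      · have := hMS s hs; omega
    rw [Finset.mem_filter, Finset.mem_filter, Finset.mem_powersetCard]
    refine ⟨⟨⟨?_, ?_⟩, ?_⟩, ?_⟩
    · intro x hx
      rcases Finset.mem_union.mp hx with h | h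
      · exact hSD h
      · have := hEM x h
        rw [hD, Finset.mem_erase, Finset.mem_erase, Finset.mem_Icc]
        refine ⟨by omega, by omega, by omega, by omega⟩
    · rw [Finset.card_union_of_disjoint hdisj, hScard, hEcard]; omega
    · exact pred_of_union K i S E
        (by rw [Finset.card_insert_of_notMem hiS, hScard]; omega) hpoint
    · exact lowP_union (K - 1) S E
        (fun s hs e he => hpoint s (Finset.mem_insert_of_mem hs) e he) hScard
  · -- left inverse
    intro T hT
    rw [Finset.mem_filter] at hT
    exact Finset.union_sdiff_of_subset (hT.2 ▸ lowP_subset (K - 1) T)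
  · -- right inverse
    intro E hE
    rw [Finset.mem_powersetCard] at hE
    have hdisj : Disjoint S E := by
      rw [Finset.disjoint_left]
      intro a haS haE
      have := Finset.mem_Ioc.mp (hE.1 haE)
      have := hMS a haS
      omega
    exact Finset.union_sdiff_cancel_left hdisj

lemma coeff_id (N t : ℕ) (hN : 2 ≤ N) (ht : t ≤ N - 2) :
    1 / (((N - 1).choose t : ℕ) : ℝ) + 1 / (((N - 1).choose (t + 1) : ℕ) : ℝ) =
      (N : ℝ) / ((N : ℝ) - 1) * (1 / (((N - 2).choose t : ℕ) : ℝ)) := by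
  obtain ⟨n, rfl⟩ : ∃ n, N = n + 2 := ⟨N - 2, by omega⟩
  have h1 : n + 2 - 1 = n + 1 := by omega
  have h2 : n + 2 - 2 = n := by omega
  simp only [h1, h2] at ht ⊢
  have htn : t ≤ n := ht
  have hb : ((n + 1).choose (t + 1) : ℝ) * ((t : ℝ) + 1) =
      ((n : ℝ) + 1) * (n.choose t : ℝ) := by
    have := (Nat.add_one_mul_choose_eq n t).symm
    exact_mod_cast this
  have ha : ((n + 1).choose t : ℝ) * ((n : ℝ) + 1 - t) =
      ((n : ℝ) + 1) * (n.choose t : ℝ) := by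
    have hnat : (n + 1).choose t * (n + 1 - t) = n.choose t * (n + 1) := by
      rw [← Nat.choose_mul_succ_eq n t]
    have hcast : ((n + 1 - t : ℕ) : ℝ) = (n : ℝ) + 1 - t := by
      have : t ≤ n + 1 := by omega
      push_cast [this]; ring
    calc ((n + 1).choose t : ℝ) * ((n : ℝ) + 1 - t)
        = (((n + 1).choose t * (n + 1 - t) : ℕ) : ℝ) := by rw [← hcast]; push_cast; ring
      _ = ((n.choose t * (n + 1) : ℕ) : ℝ) := by rw [hnat]
      _ = ((n : ℝ) + 1) * (n.choose t : ℝ) := by push_cast; ring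
  have pa : (0 : ℝ) < ((n + 1).choose t : ℝ) := by
    exact_mod_cast Nat.choose_pos (by omega : t ≤ n + 1)
  have pb : (0 : ℝ) < ((n + 1).choose (t + 1) : ℝ) := by
    exact_mod_cast Nat.choose_pos (by omega : t + 1 ≤ n + 1)
  have pc : (0 : ℝ) < (n.choose t : ℝ) := by exact_mod_cast Nat.choose_pos htn
  have hN' : ((n + 2 : ℕ) : ℝ) = (n : ℝ) + 2 := by push_cast; ring
  rw [hN', show ((n : ℝ) + 2) - 1 = (n : ℝ) + 1 by ring]
  have hn1 : ((n : ℝ) + 1) ≠ 0 := by positivity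
  field_simp
  nlinarith [ha, hb, pa, pb, pc]

/-- `B_k(i)`: the family of subsets `S ⊆ {1,…,N}` with `|S| = k` and `i ∉ S`. -/
def Bk (N k i : ℕ) : Finset (Finset ℕ) := ((Finset.Icc 1 N).erase i).powersetCard k

/-- Recursion for the Shapley values of the weighted K-NN classifier. -/
theorem wknn_shapley_recursion (N K : ℕ) (hK1 : 1 ≤ K) (hKN : K ≤ N)
    (w : ℕ → ℝ) (y : ℕ → ℕ) (ytest : ℕ) :
    shapley (Finset.Icc 1 N) (wknnUtil K w y ytest) N =
      (1 / (N : ℝ)) * ∑ k ∈ Finset.range K, (1 / ((N - 1).choose k : ℝ)) *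
        ∑ S ∈ Bk N k N,
          (wknnUtil K w y ytest (insert N S) - wknnUtil K w y ytest S) ∧
    ∀ i, 1 ≤ i → i ≤ N - 1 →
      shapley (Finset.Icc 1 N) (wknnUtil K w y ytest) i =
        shapley (Finset.Icc 1 N) (wknnUtil K w y ytest) (i + 1) +
          (1 / ((N : ℝ) - 1)) *
            ((∑ k ∈ Finset.range (K - 1), (1 / ((N - 2).choose k : ℝ)) *
                ∑ S ∈ Bk N k i ∩ Bk N k (i + 1),
                  (wknnUtil K w y ytest (insert i S) -
                    wknnUtil K w y ytest (insert (i + 1) S))) +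
              ∑ k ∈ Finset.Icc (K - 1) (N - 2), (1 / ((N - 2).choose k : ℝ)) *
                ∑ S ∈ Bk N (K - 1) i ∩ Bk N (K - 1) (i + 1),
                  ((N - (insert i (insert (i + 1) S)).sup id).choose (k + 1 - K) : ℝ) *
                    (wknnUtil K w y ytest (insert i S) -
                      wknnUtil K w y ytest (insert (i + 1) S))) := by
  have hN1 : 1 ≤ N := le_trans hK1 hKN
  constructor
  · -- Part 1
    have hNmem : N ∈ Finset.Icc 1 N := Finset.mem_Icc.mpr ⟨hN1, le_refl N⟩
    have hcard : (Finset.Icc 1 N).card = N := by rw [Nat.card_Icc]; omega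
    have hecard : ((Finset.Icc 1 N).erase N).card = N - 1 := by
      rw [Finset.card_erase_of_mem hNmem, hcard]
    rw [shapley, hcard, Finset.sum_powerset, hecard]
    congr 1
    rw [← Finset.sum_range_add_sum_Ico _ (show K ≤ N - 1 + 1 by omega)]
    have hzero : ∀ j ∈ Finset.Ico K (N - 1 + 1),
        (∑ S ∈ Finset.powersetCard j ((Finset.Icc 1 N).erase N),
          (1 / ((N - 1).choose S.card : ℝ)) *
            (wknnUtil K w y ytest (insert N S) - wknnUtil K w y ytest S)) = 0 := by
      intro j hj
      rw [Finset.mem_Ico] at hj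
      apply Finset.sum_eq_zero
      intro S hS
      rw [Finset.mem_powersetCard] at hS
      have hlt : ∀ b ∈ S, b < N := by
        intro b hb
        have := hS.1 hb
        rw [Finset.mem_erase, Finset.mem_Icc] at this
        omega
      rw [wknn_insert_top K w y ytest S N (by rw [hS.2]; exact hj.1) hlt,
        sub_self, mul_zero]
    rw [Finset.sum_eq_zero hzero, add_zero]
    apply Finset.sum_congr rfl
    intro k _
    rw [Bk, Finset.mul_sum]
    apply Finset.sum_congr rfl
    intro S hS
    rw [Finset.mem_powersetCard] at hS
    rw [hS.2]
  · -- Part 2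
    intro i hi1 hi2
    have hN2 : 2 ≤ N := by omega
    set ν := wknnUtil K w y ytest with hν
    have hcard : (Finset.Icc 1 N).card = N := by rw [Nat.card_Icc]; omega
    set D := ((Finset.Icc 1 N).erase i).erase (i + 1) with hD
    have hiIcc : i ∈ Finset.Icc 1 N := Finset.mem_Icc.mpr ⟨hi1, by omega⟩
    have hjIcc : i + 1 ∈ Finset.Icc 1 N := Finset.mem_Icc.mpr ⟨by omega, by omega⟩
    have hjmem : i + 1 ∈ (Finset.Icc 1 N).erase i :=
      Finset.mem_erase.mpr ⟨by omega, hjIcc⟩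
    have himem : i ∈ (Finset.Icc 1 N).erase (i + 1) :=
      Finset.mem_erase.mpr ⟨by omega, hiIcc⟩
    have hjD : i + 1 ∉ D := Finset.notMem_erase _ _
    have hiD : i ∉ D := by
      rw [hD]
      intro h
      exact Finset.notMem_erase i _ (Finset.mem_of_mem_erase h)
    have hEi : (Finset.Icc 1 N).erase i = insert (i + 1) D :=
      (Finset.insert_erase hjmem).symm
    have hEj : (Finset.Icc 1 N).erase (i + 1) = insert i D := by
      rw [hD, Finset.erase_right_comm]
      exact (Finset.insert_erase himem).symm
    have hDcard : D.card = N - 2 := by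
      rw [hD, Finset.card_erase_of_mem hjmem, Finset.card_erase_of_mem hiIcc, hcard]
      omega
    have hsubmem : ∀ T : Finset ℕ, T ⊆ D → i ∉ T ∧ i + 1 ∉ T :=
      fun T hT => ⟨fun h => hiD (hT h), fun h => hjD (hT h)⟩
    set δ : ℝ := w i * (if y i = ytest then (1 : ℝ) else 0) -
      w (i + 1) * (if y (i + 1) = ytest then (1 : ℝ) else 0) with hδ
    have hdiff : ∀ T : Finset ℕ, T ⊆ D →
        ν (insert i T) - ν (insert (i + 1) T) =
          if i ∈ lowP K (insert i T) then δ else 0 := by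
      intro T hT
      exact wknn_diff K w y ytest i T (hsubmem T hT).1 (hsubmem T hT).2
    have hNpos : (0 : ℝ) < (N : ℝ) := by exact_mod_cast (by omega : 0 < N)
    have hNN : (1 / (N : ℝ)) * ((N : ℝ) / ((N : ℝ) - 1)) = 1 / ((N : ℝ) - 1) := by
      field_simp
    have eA : shapley (Finset.Icc 1 N) ν i - shapley (Finset.Icc 1 N) ν (i + 1) =
        (1 / ((N : ℝ) - 1)) * ∑ T ∈ D.powerset,
          (1 / ((N - 2).choose T.card : ℝ)) * (ν (insert i T) - ν (insert (i + 1) T)) := by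
      rw [shapley, shapley, hcard, hEi, hEj,
        Finset.sum_powerset_insert hjD, Finset.sum_powerset_insert hiD,
        ← mul_sub, ← Finset.sum_add_distrib, ← Finset.sum_add_distrib,
        ← Finset.sum_sub_distrib, Finset.mul_sum, Finset.mul_sum]
      apply Finset.sum_congr rfl
      intro T hT
      rw [Finset.mem_powerset] at hT
      have hiT := (hsubmem T hT).1
      have hjT := (hsubmem T hT).2
      have hci : (insert i T).card = T.card + 1 := Finset.card_insert_of_notMem hiT
      have hcj : (insert (i + 1) T).card = T.card + 1 := Finset.card_insert_of_notMem hjT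
      have hcomm : insert i (insert (i + 1) T) = insert (i + 1) (insert i T) :=
        Finset.insert_comm _ _ _
      have htle : T.card ≤ N - 2 := hDcard ▸ Finset.card_le_card hT
      have hco := coeff_id N T.card hN2 htle
      rw [hci, hcj, hcomm]
      linear_combination ((ν (insert i T) - ν (insert (i + 1) T)) / (N : ℝ)) * hco +
        ((1 / ((N - 2).choose T.card : ℝ)) * (ν (insert i T) - ν (insert (i + 1) T))) * hNN
    have hBk : ∀ k : ℕ, Bk N k i ∩ Bk N k (i + 1) = D.powersetCard k := by
      intro k
      ext S
      rw [Finset.mem_inter, Bk, Bk, Finset.mem_powersetCard, Finset.mem_powersetCard,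
        Finset.mem_powersetCard]
      constructor
      · rintro ⟨⟨hs1, hc⟩, ⟨hs2, -⟩⟩
        refine ⟨?_, hc⟩
        intro x hx
        have h2 := hs2 hx
        rw [Finset.mem_erase] at h2
        rw [hD, Finset.mem_erase]
        exact ⟨h2.1, hs1 hx⟩
      · rintro ⟨hs, hc⟩
        refine ⟨⟨fun x hx => ?_, hc⟩, ⟨fun x hx => ?_, hc⟩⟩
        · exact Finset.mem_of_mem_erase (hs hx)
        · have := hs hx
          rw [hD, Finset.mem_erase, Finset.mem_erase] at this
          exact Finset.mem_erase.mpr ⟨this.1, this.2.2⟩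
    have hPredS : ∀ S : Finset ℕ, S ⊆ D → S.card = K - 1 →
        ν (insert i S) - ν (insert (i + 1) S) = δ := by
      intro S hS hSc
      rw [hdiff S hS, if_pos]
      have hcle : (insert i S).card ≤ K := by
        rw [Finset.card_insert_of_notMem (fun h => hiD (hS h)), hSc]
        omega
      rw [lowP_eq_self hcle]
      exact Finset.mem_insert_self _ _
    have eChunk2 : ∀ k, K - 1 ≤ k →
        ∑ T ∈ D.powersetCard k, (ν (insert i T) - ν (insert (i + 1) T)) =
          ∑ S ∈ D.powersetCard (K - 1),
            ((N - (insert i (insert (i + 1) S)).sup id).choose (k + 1 - K) : ℝ) *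
              (ν (insert i S) - ν (insert (i + 1) S)) := by
      intro k hk
      have h1 : ∀ T ∈ D.powersetCard k,
          ν (insert i T) - ν (insert (i + 1) T) =
            if i ∈ lowP K (insert i T) then δ else 0 :=
        fun T hT => hdiff T (Finset.mem_powersetCard.mp hT).1
      rw [Finset.sum_congr rfl h1, Finset.sum_ite, Finset.sum_const_zero, add_zero,
        Finset.sum_const, nsmul_eq_mul, count_eq K i N k hK1 hk D hD]
      have hR : ∑ S ∈ D.powersetCard (K - 1),
          ((N - (insert i (insert (i + 1) S)).sup id).choose (k + 1 - K) : ℝ) *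
            (ν (insert i S) - ν (insert (i + 1) S)) =
          ∑ S ∈ D.powersetCard (K - 1),
            ((((Finset.Ioc ((insert i (insert (i + 1) S)).sup id) N).powersetCard
              (k + 1 - K)).card : ℕ) : ℝ) * δ := by
        apply Finset.sum_congr rfl
        intro S hS
        rw [Finset.mem_powersetCard] at hS
        rw [hPredS S hS.1 hS.2, Finset.card_powersetCard, Nat.card_Ioc]
      rw [hR, ← Finset.sum_mul]
      congr 1
      exact Nat.cast_sum _ _
    have eW : ∑ T ∈ D.powerset,
        (1 / ((N - 2).choose T.card : ℝ)) * (ν (insert i T) - ν (insert (i + 1) T)) =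
        (∑ k ∈ Finset.range (K - 1), (1 / ((N - 2).choose k : ℝ)) *
            ∑ S ∈ Bk N k i ∩ Bk N k (i + 1),
              (ν (insert i S) - ν (insert (i + 1) S))) +
          ∑ k ∈ Finset.Icc (K - 1) (N - 2), (1 / ((N - 2).choose k : ℝ)) *
            ∑ S ∈ Bk N (K - 1) i ∩ Bk N (K - 1) (i + 1),
              ((N - (insert i (insert (i + 1) S)).sup id).choose (k + 1 - K) : ℝ) *
                (ν (insert i S) - ν (insert (i + 1) S)) := by
      rw [Finset.sum_powerset, hDcard,
        ← Finset.sum_range_add_sum_Ico _ (show K - 1 ≤ N - 2 + 1 by omega)]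
      congr 1
      · apply Finset.sum_congr rfl
        intro k _
        rw [hBk k, Finset.mul_sum]
        apply Finset.sum_congr rfl
        intro S hS
        rw [(Finset.mem_powersetCard.mp hS).2]
      · rw [show Finset.Ico (K - 1) (N - 2 + 1) = Finset.Icc (K - 1) (N - 2) from
          Finset.Ico_add_one_right_eq_Icc _ _]
        apply Finset.sum_congr rfl
        intro k hk
        rw [Finset.mem_Icc] at hk
        have hpull : ∑ T ∈ D.powersetCard k,
            (1 / ((N - 2).choose T.card : ℝ)) * (ν (insert i T) - ν (insert (i + 1) T)) =
            (1 / ((N - 2).choose k : ℝ)) *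
              ∑ T ∈ D.powersetCard k, (ν (insert i T) - ν (insert (i + 1) T)) := by
          rw [Finset.mul_sum]
          apply Finset.sum_congr rfl
          intro T hT
          rw [(Finset.mem_powersetCard.mp hT).2]
        rw [hpull, eChunk2 k hk.1, hBk (K - 1)]
    rw [← eW, ← eA]
    ring
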